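/- Anomalous scaling limit at the critical point for a sharp excitation branch with dispersion |k|^α: let n ≥ 1, 0 < α < n, β > 0, Y ∈ ℝⁿ, let j : ℝⁿ → ℂ be bounded, measurable, and continuous at 0, and let g : ℝⁿ → ℝ be a nonnegative measurable function with ∫_{ℝⁿ} (1 + |k|^{−α}) g(k) dk < ∞. Then lim_{R→∞} ∫_{ℝⁿ∖{0}} e^{i⟨k,Y⟩} · R^{−α} · (1 − e^{−β(|k|/R)^α})^{−1} · j(k/R) · g(k) dk = ∫_{ℝⁿ∖{0}} e^{i⟨k,Y⟩} · (β |k|^α)^{−1} · j(0) · g(k) dk; in particular for j(0) ≠ 0 and g not almost everywhere zero with Y = 0, the limit of the autocorrelation integral is finite and (for g ≥ 0, j(0) > 0) nonzero. -/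

import Mathlib

open MeasureTheory Complex Filter Real Topology
open scoped ENNReal
set_option maxHeartbeats 1000000

lemma aux_pos {x : ℝ} (hx : 0 < x) : 0 < 1 - Real.exp (-x) := by
  have := Real.exp_lt_one_iff.mpr (neg_lt_zero.mpr hx)
  linarith

lemma aux_inv_le {x : ℝ} (hx : 0 < x) : (1 - Real.exp (-x))⁻¹ ≤ 1 + x⁻¹ := by
  have h3 : Real.exp (-x) ≤ (1 + x)⁻¹ := by
    rw [Real.exp_neg]
    have h4 : 1 + x ≤ Real.exp x := by linarith [Real.add_one_le_exp x]
    exact inv_anti₀ (by linarith) h4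
  have h2 : x / (1 + x) ≤ 1 - Real.exp (-x) := by
    have : x / (1 + x) = 1 - (1 + x)⁻¹ := by field_simp; ring
    linarith [this]
  have hpos : 0 < x / (1 + x) := by positivity
  calc (1 - Real.exp (-x))⁻¹ ≤ (x / (1 + x))⁻¹ := by gcongr
    _ = (1 + x) / x := by rw [inv_div]
    _ = 1 + x⁻¹ := by field_simp; ring

lemma aux_tendsto {c : ℝ} (hc : 0 < c) :
    Tendsto (fun t : ℝ => t * (1 - Real.exp (-(c * t)))⁻¹) (𝓝[>] (0:ℝ)) (𝓝 c⁻¹) := by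
  have h1 : HasDerivAt (fun t : ℝ => 1 - Real.exp (-(c * t))) c 0 := by
    have h0 : HasDerivAt (fun t : ℝ => -(c * t)) (-c) 0 := by
      simpa [Pi.neg_def] using ((hasDerivAt_id (0:ℝ)).const_mul c).neg
    have := (h0.exp).const_sub 1
    simpa using this
  have h2 := hasDerivAt_iff_tendsto_slope.mp h1
  have h3 : Tendsto (fun t : ℝ => (slope (fun t : ℝ => 1 - Real.exp (-(c * t))) 0 t)⁻¹)
      (𝓝[≠] (0:ℝ)) (𝓝 c⁻¹) := h2.inv₀ hc.ne'
  have h4 := h3.mono_left (nhdsWithin_mono 0 (fun t ht => (ne_of_gt ht)))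
  refine h4.congr' ?_
  filter_upwards [self_mem_nhdsWithin] with t ht
  simp only [slope_def_field]
  simp only [mul_zero, neg_zero, Real.exp_zero, sub_self, sub_zero]
  rw [inv_div, div_eq_mul_inv]


/-- Anomalous scaling limit at the critical point for a sharp excitation branch with
dispersion `e(k) = |k|^α` at chemical potential `μ = 0`: the scaled Bose-weighted integral
converges to the classical `1/(β|k|^α)` weighted integral; in particular for `j(0) > 0`
(real) and `g` not a.e. zero the limit autocorrelation (at `Y = 0`) is finite and nonzero. -/
theorem anomalous_scaling_limit {n : ℕ} (hn : 1 ≤ n) (α : ℝ) (hα0 : 0 < α) (hαn : α < n)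
    (β : ℝ) (hβ : 0 < β) (Y : EuclideanSpace ℝ (Fin n))
    (j : EuclideanSpace ℝ (Fin n) → ℂ) (hjmeas : Measurable j)
    (Cj : ℝ) (hjbd : ∀ k, ‖j k‖ ≤ Cj) (hjcont : ContinuousAt j 0)
    (g : EuclideanSpace ℝ (Fin n) → ℝ) (hgmeas : Measurable g) (hgnn : ∀ k, 0 ≤ g k)
    (hgint : Integrable (fun k : EuclideanSpace ℝ (Fin n) => (1 + ‖k‖ ^ (-α)) * g k)
      (volume : Measure (EuclideanSpace ℝ (Fin n)))) :
    Tendsto (fun R : ℝ =>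
        ∫ k in ({0} : Set (EuclideanSpace ℝ (Fin n)))ᶜ,
          Complex.exp (Complex.I * ((inner ℝ k Y : ℝ) : ℂ)) * ((R ^ (-α) : ℝ) : ℂ) *
            (1 - ((Real.exp (-(β * (‖k‖ / R) ^ α)) : ℝ) : ℂ))⁻¹ * j (R⁻¹ • k) *
            ((g k : ℝ) : ℂ))
      atTop
      (𝓝 (∫ k in ({0} : Set (EuclideanSpace ℝ (Fin n)))ᶜ,
        Complex.exp (Complex.I * ((inner ℝ k Y : ℝ) : ℂ)) * (((β * ‖k‖ ^ α)⁻¹ : ℝ) : ℂ) *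
          j 0 * ((g k : ℝ) : ℂ))) ∧
    (Y = 0 → (j 0).im = 0 → 0 < (j 0).re → ¬ (∀ᵐ k ∂(volume : Measure (EuclideanSpace ℝ (Fin n))), g k = 0) →
      (∫ k in ({0} : Set (EuclideanSpace ℝ (Fin n)))ᶜ,
        Complex.exp (Complex.I * ((inner ℝ k Y : ℝ) : ℂ)) * (((β * ‖k‖ ^ α)⁻¹ : ℝ) : ℂ) *
          j 0 * ((g k : ℝ) : ℂ)) ≠ 0) := by
  have hCj : 0 ≤ Cj := le_trans (norm_nonneg _) (hjbd 0)
  set M : ℝ := max 1 β⁻¹ with hM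
  have hM1 : (1:ℝ) ≤ M := le_max_left _ _
  have hMβ : β⁻¹ ≤ M := le_max_right _ _
  have ms : MeasurableSet (({0} : Set (EuclideanSpace ℝ (Fin n)))ᶜ) := (measurableSet_singleton 0).compl
  haveI : Nontrivial (EuclideanSpace ℝ (Fin n)) := by
    refine ⟨⟨EuclideanSpace.single (⟨0, hn⟩ : Fin n) (1:ℝ), 0, fun h => ?_⟩⟩
    have := congrArg (fun v : (EuclideanSpace ℝ (Fin n)) => v ⟨0, hn⟩) h
    simp only [EuclideanSpace.single_apply, if_pos rfl] at this
    exact one_ne_zero this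
  constructor
  · -- Part 1: dominated convergence
    refine tendsto_integral_filter_of_dominated_convergence
      (fun k => M * Cj * ((1 + ‖k‖ ^ (-α)) * g k)) ?_ ?_ ?_ ?_
    · refine Filter.Eventually.of_forall fun R => Measurable.aestronglyMeasurable ?_
      have mexp : Measurable fun k : (EuclideanSpace ℝ (Fin n)) => Complex.exp (Complex.I * ((inner ℝ k Y : ℝ) : ℂ)) :=
        (Complex.continuous_exp.comp (continuous_const.mul
          (Complex.continuous_ofReal.comp (continuous_id.inner continuous_const)))).measurable
      have m3 : Measurable fun k : (EuclideanSpace ℝ (Fin n)) =>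
          ((1 : ℂ) - ((Real.exp (-(β * (‖k‖ / R) ^ α)) : ℝ) : ℂ))⁻¹ := by
        refine (Measurable.inv (measurable_const.sub ?_))
        have hc : Continuous fun k : (EuclideanSpace ℝ (Fin n)) => (‖k‖ / R) ^ α :=
          (continuous_norm.div_const R).rpow_const (fun x => Or.inr hα0.le)
        exact Complex.measurable_ofReal.comp
          (Real.measurable_exp.comp (((hc.measurable).const_mul β).neg))
      have hs : Measurable fun k : (EuclideanSpace ℝ (Fin n)) => R⁻¹ • k := measurable_const_smul R⁻¹
      have m4 : Measurable fun k : (EuclideanSpace ℝ (Fin n)) => j (R⁻¹ • k) := hjmeas.comp hs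
      exact ((((mexp.mul measurable_const).mul m3).mul m4).mul
        (Complex.measurable_ofReal.comp hgmeas))
    · filter_upwards [eventually_ge_atTop (1:ℝ)] with R hR
      filter_upwards [ae_restrict_mem ms] with k hk
      have hk0 : (0:ℝ) < ‖k‖ := norm_pos_iff.mpr hk
      have hR0 : (0:ℝ) < R := lt_of_lt_of_le one_pos hR
      set x : ℝ := β * (‖k‖ / R) ^ α with hxdef
      have hxpos : 0 < x := by
        have : 0 < ‖k‖ / R := div_pos hk0 hR0
        positivity
      have hRα : 0 < R ^ (-α) := Real.rpow_pos_of_pos hR0 _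
      have hxeq : x = (β * ‖k‖ ^ α) * R ^ (-α) := by
        rw [hxdef, Real.div_rpow (norm_nonneg k) hR0.le, Real.rpow_neg hR0.le]; ring
      have hnorm : ‖Complex.exp (Complex.I * ((inner ℝ k Y : ℝ) : ℂ)) * ((R ^ (-α) : ℝ) : ℂ) *
            (1 - ((Real.exp (-x) : ℝ) : ℂ))⁻¹ * j (R⁻¹ • k) * ((g k : ℝ) : ℂ)‖
          = R ^ (-α) * (1 - Real.exp (-x))⁻¹ * ‖j (R⁻¹ • k)‖ * g k := by
        rw [norm_mul, norm_mul, norm_mul, norm_mul]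
        have e1 : ‖Complex.exp (Complex.I * ((inner ℝ k Y : ℝ) : ℂ))‖ = 1 := by
          rw [Complex.norm_exp]; simp
        have e2 : ((1:ℂ) - ((Real.exp (-x) : ℝ) : ℂ)) = ((1 - Real.exp (-x) : ℝ) : ℂ) := by
          push_cast; ring
        rw [e1, e2, norm_inv, Complex.norm_real, Complex.norm_real, Complex.norm_real,
          Real.norm_eq_abs, Real.norm_eq_abs, Real.norm_eq_abs,
          abs_of_pos hRα, abs_of_pos (aux_pos hxpos), _root_.abs_of_nonneg (hgnn k)]
        ring
      rw [hnorm]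
      have key : R ^ (-α) * (1 - Real.exp (-x))⁻¹ ≤ M * (1 + ‖k‖ ^ (-α)) := by
        have step1 : R ^ (-α) * (1 - Real.exp (-x))⁻¹ ≤ R ^ (-α) * (1 + x⁻¹) :=
          mul_le_mul_of_nonneg_left (aux_inv_le hxpos) hRα.le
        have step2 : R ^ (-α) * (1 + x⁻¹) = R ^ (-α) + β⁻¹ * ‖k‖ ^ (-α) := by
          rw [hxeq, Real.rpow_neg (norm_nonneg k)]
          have h1 : (‖k‖:ℝ) ^ α ≠ 0 := (Real.rpow_pos_of_pos hk0 _).ne'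
          field_simp
        have hR1 : R ^ (-α) ≤ 1 :=
          Real.rpow_le_one_of_one_le_of_nonpos hR (neg_nonpos.mpr hα0.le)
        have hknn : 0 ≤ ‖k‖ ^ (-α) := Real.rpow_nonneg (norm_nonneg k) _
        nlinarith [mul_le_mul_of_nonneg_right hMβ hknn, mul_le_mul_of_nonneg_right hM1 hknn]
      calc R ^ (-α) * (1 - Real.exp (-x))⁻¹ * ‖j (R⁻¹ • k)‖ * g k
          ≤ (M * (1 + ‖k‖ ^ (-α))) * Cj * g k := by
            have hln : 0 ≤ R ^ (-α) * (1 - Real.exp (-x))⁻¹ :=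
              mul_nonneg hRα.le (inv_nonneg.mpr (aux_pos hxpos).le)
            have := mul_le_mul key (hjbd (R⁻¹ • k)) (norm_nonneg _)
              (by positivity)
            exact mul_le_mul_of_nonneg_right this (hgnn k)
        _ = M * Cj * ((1 + ‖k‖ ^ (-α)) * g k) := by ring
    · exact (hgint.const_mul (M * Cj)).restrict
    · filter_upwards [ae_restrict_mem ms] with k hk
      have hk0 : (0:ℝ) < ‖k‖ := norm_pos_iff.mpr hk
      set c : ℝ := β * ‖k‖ ^ α with hc
      have hcpos : 0 < c := by positivity
      have harg : ∀ R : ℝ, 0 < R → β * (‖k‖ / R) ^ α = c * R ^ (-α) := fun R hR0 => by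
        rw [hc, Real.div_rpow (norm_nonneg k) hR0.le, Real.rpow_neg hR0.le]; ring
      have hsub : Tendsto (fun R : ℝ => R ^ (-α)) atTop (𝓝[>] (0:ℝ)) := by
        rw [tendsto_nhdsWithin_iff]
        exact ⟨tendsto_rpow_neg_atTop hα0,
          (eventually_gt_atTop 0).mono fun R hR => Real.rpow_pos_of_pos hR _⟩
      have T1real : Tendsto
          (fun R : ℝ => R ^ (-α) * (1 - Real.exp (-(β * (‖k‖ / R) ^ α)))⁻¹)
          atTop (𝓝 c⁻¹) := by
        have hcomp := (aux_tendsto hcpos).comp hsub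
        refine hcomp.congr' ?_
        filter_upwards [eventually_gt_atTop (0:ℝ)] with R hR0
        simp only [Function.comp]
        rw [harg R hR0]
      have T1C : Tendsto (fun R : ℝ => ((R ^ (-α) : ℝ) : ℂ) *
          (1 - ((Real.exp (-(β * (‖k‖ / R) ^ α)) : ℝ) : ℂ))⁻¹) atTop (𝓝 ((c⁻¹ : ℝ) : ℂ)) := by
        have := (Complex.continuous_ofReal.tendsto _).comp T1real
        refine this.congr fun R => ?_
        simp only [Function.comp_apply]
        norm_cast
      have T2 : Tendsto (fun R : ℝ => j (R⁻¹ • k)) atTop (𝓝 (j 0)) := by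
        have hsm : Tendsto (fun R : ℝ => R⁻¹ • k) atTop (𝓝 (0 : (EuclideanSpace ℝ (Fin n)))) := by
          have h0 : Tendsto (fun R : ℝ => R⁻¹) atTop (𝓝 (0:ℝ)) := tendsto_inv_atTop_zero
          have := h0.smul_const k
          simpa using this
        exact hjcont.tendsto.comp hsm
      have := (((tendsto_const_nhds
          (x := Complex.exp (Complex.I * ((inner ℝ k Y : ℝ) : ℂ)))).mul T1C).mul T2).mul
        (tendsto_const_nhds (x := ((g k : ℝ) : ℂ)))
      simpa only [mul_assoc] using this
  · -- Part 2
    rintro rfl him hre hg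
    haveI : NullSingletonClass (volume : Measure (EuclideanSpace ℝ (Fin n))) := by infer_instance
    have hj0ne : j 0 ≠ 0 := fun h0 => by simp [h0] at hre
    set h : (EuclideanSpace ℝ (Fin n)) → ℝ := fun k => (β * ‖k‖ ^ α)⁻¹ * g k with hh
    have hrw : ∀ k : (EuclideanSpace ℝ (Fin n)), Complex.exp (Complex.I * ((inner ℝ k (0:(EuclideanSpace ℝ (Fin n))) : ℝ) : ℂ)) *
        (((β * ‖k‖ ^ α)⁻¹ : ℝ) : ℂ) * j 0 * ((g k : ℝ) : ℂ) = (h k) • j 0 := by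
      intro k
      simp only [hh, inner_zero_right, Complex.ofReal_zero, mul_zero, Complex.exp_zero,
        Complex.real_smul]
      push_cast
      ring
    simp_rw [hrw]
    rw [integral_smul_const]
    refine smul_ne_zero ?_ hj0ne
    rw [MeasureTheory.restrict_compl_singleton]
    have hkey : ∀ k : (EuclideanSpace ℝ (Fin n)), (β * ‖k‖ ^ α)⁻¹ = β⁻¹ * ‖k‖ ^ (-α) := fun k => by
      rw [mul_inv, Real.rpow_neg (norm_nonneg k)]
    have hint : Integrable h (volume : Measure (EuclideanSpace ℝ (Fin n))) := by
      refine (hgint.const_mul β⁻¹).mono ?_ ?_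
      · have hc : Continuous fun k : (EuclideanSpace ℝ (Fin n)) => ‖k‖ ^ α :=
          continuous_norm.rpow_const (fun x => Or.inr hα0.le)
        exact Measurable.aestronglyMeasurable
          (((measurable_const.mul hc.measurable).inv).mul hgmeas)
      · refine Filter.Eventually.of_forall fun k => ?_
        have hknn : 0 ≤ ‖k‖ ^ (-α) := Real.rpow_nonneg (norm_nonneg k) _
        have h1 : h k = β⁻¹ * ‖k‖ ^ (-α) * g k := by rw [hh]; simp [hkey k]
        have h2 : 0 ≤ h k := by
          rw [h1]; exact mul_nonneg (mul_nonneg (inv_nonneg.2 hβ.le) hknn) (hgnn k)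
        have h3 : (0:ℝ) ≤ β⁻¹ * ((1 + ‖k‖ ^ (-α)) * g k) :=
          mul_nonneg (inv_nonneg.2 hβ.le) (mul_nonneg (by positivity) (hgnn k))
        rw [Real.norm_eq_abs, Real.norm_eq_abs, _root_.abs_of_nonneg h2, _root_.abs_of_nonneg h3]
        rw [h1]
        nlinarith [mul_nonneg (inv_nonneg.mpr hβ.le) (hgnn k), hgnn k]
    have hpos : 0 < ∫ k, h k := by
      rw [integral_pos_iff_support_of_nonneg ?nn hint]
      case nn =>
        intro k
        have : h k = β⁻¹ * ‖k‖ ^ (-α) * g k := by rw [hh]; simp [hkey k]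
        rw [this]
        have := Real.rpow_nonneg (norm_nonneg k) (-α)
        have := hgnn k
        positivity
      have hsub : (Function.support g) \ {0} ⊆ Function.support h := by
        rintro k ⟨hkg, hk0⟩
        have hk0' : k ≠ 0 := hk0
        have hknorm : (0:ℝ) < ‖k‖ := norm_pos_iff.mpr hk0'
        have : (β * ‖k‖ ^ α)⁻¹ ≠ 0 := by positivity
        exact mul_ne_zero this hkg
      have h1 : (volume : Measure (EuclideanSpace ℝ (Fin n))) (Function.support g) ≠ 0 := by
        intro h0
        exact hg (ae_iff.mpr (by simpa [Function.support] using h0))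
      have h2 : (volume : Measure (EuclideanSpace ℝ (Fin n))) ((Function.support g) \ {0})
          = (volume : Measure (EuclideanSpace ℝ (Fin n))) (Function.support g) :=
        measure_diff_null (measure_singleton 0)
      calc (0 : ℝ≥0∞) < (volume : Measure (EuclideanSpace ℝ (Fin n))) ((Function.support g) \ {0}) := by
            rw [h2]; exact lt_of_le_of_ne (zero_le) (Ne.symm h1)
        _ ≤ (volume : Measure (EuclideanSpace ℝ (Fin n))) (Function.support h) := measure_mono hsub
    exact hpos.ne'
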